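/- Define F : ℝ² → ℝ² by F(x₁,x₂) = (1,−2) if x₁ < 0, F(x₁,x₂) = (−1,0) if x₁ > 0, and F(x₁,x₂) = (0,−2) if x₁ = 0 (the Filippov sliding vector field on the line x₁ = 0). Then through every point of ℝ² there is a unique complete integral curve of F, and the resulting semiflow Φ : ℝ² × ℝ₊ → ℝ², Φ(X,t) = φ_X(t) where φ_X is the integral curve through X, is continuous in (X,t). -/

import Mathlib

open Set Filter Topology

/-- The domain `[0, T)`, where `T ∈ (0, ∞]` is encoded as an `EReal`. -/
def eDom (T : EReal) : Set ℝ := {t : ℝ | 0 ≤ t ∧ (t : EReal) < T}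

/-- `φ` is an integral curve of the (possibly discontinuous) vector field `F` on `[0,T)`
with initial condition `X₀`: `φ` is continuous on `[0,T)`, `φ 0 = X₀`, and there is a
closed countable subset `D` of `[0,T)` containing `0` such that for every `u ∈ D` there is
`v ∈ D ∪ {T}` with `v > u`, `(u,v) ∩ D = ∅`, `φ` is `C¹` on `(u,v)` with `φ' = F ∘ φ`
there, and `φ'(t) → F(φ(u))` as `t → u+`; moreover, the intervals `[u,v)` cover `[0,T)`. -/
def IsNetIntegralCurve {E : Type*} [NormedAddCommGroup E] [NormedSpace ℝ E]
    (F : E → E) (X₀ : E) (T : EReal) (φ : ℝ → E) : Prop :=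
  0 < T ∧ φ 0 = X₀ ∧ ContinuousOn φ (eDom T) ∧
  ∃ D : Set ℝ, D.Countable ∧ (0 : ℝ) ∈ D ∧ D ⊆ eDom T ∧ closure D ∩ eDom T ⊆ D ∧
    (∀ u ∈ D, ∃ v : EReal, ((∃ w ∈ D, (w : EReal) = v) ∨ v = T) ∧ (u : EReal) < v ∧
      (∀ w ∈ D, (u : EReal) < (w : EReal) → v ≤ (w : EReal)) ∧
      (∀ t : ℝ, (u : EReal) < (t : EReal) → (t : EReal) < v → HasDerivAt φ (F (φ t)) t) ∧
      ContinuousOn (fun t => F (φ t)) {t : ℝ | (u : EReal) < (t : EReal) ∧ (t : EReal) < v} ∧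
      Tendsto (fun t => F (φ t)) (𝓝[>] u) (𝓝 (F (φ u)))) ∧
    (∀ t ∈ eDom T, ∃ u ∈ D, u ≤ t ∧ Ioc u t ∩ D = ∅)

/-- The amenability trajectory condition: through every point `X` there is an integral
curve of the network vector field, defined on some interval `[0, t(X))` with `t(X) > 0`,
that stays in the event set `E^{ℰ(X)}` of `X`. -/
def AmenableTraj {E A : Type*} [NormedAddCommGroup E] [NormedSpace ℝ E]
    (f : A → E → E) (ℰ : E → A) : Prop :=
  ∀ X : E, ∃ tX : ℝ, 0 < tX ∧ ∃ φ : ℝ → E,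
    IsNetIntegralCurve (fun Y => f (ℰ Y) Y) X (tX : EReal) φ ∧
    ∀ t : ℝ, 0 ≤ t → t < tX → ℰ (φ t) = ℰ X

/-- The Filippov vector field of examples 4.8(1): `(1,-2)` for `x₁ < 0`, `(-1,0)` for
`x₁ > 0`, and the sliding vector field `(0,-2)` on the line `x₁ = 0`. -/
noncomputable def F₁₂ : ℝ × ℝ → ℝ × ℝ := fun X =>
  if X.1 < 0 then (1, -2) else if 0 < X.1 then (-1, 0) else (0, -2)


lemma eDom_top : eDom (⊤ : EReal) = Ici (0:ℝ) := by
  ext t; simp [eDom, EReal.coe_lt_top t]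

noncomputable def Φ12 (X : ℝ × ℝ) (t : ℝ) : ℝ × ℝ :=
  (min (X.1 + t) 0 + max (X.1 - t) 0, X.2 - 2 * max (t - max X.1 0) 0)

lemma Φcont : Continuous fun p : (ℝ × ℝ) × ℝ => Φ12 p.1 p.2 := by
  unfold Φ12; fun_prop

lemma Φ12_zero (X : ℝ × ℝ) : Φ12 X 0 = X := by
  unfold Φ12
  rcases le_total X.1 0 with h | h <;>
    simp [min_eq_left, min_eq_right, max_eq_left, max_eq_right, h]

lemma Φ12_left {a b t : ℝ} (ha : a ≤ 0) (ht : 0 ≤ t) (h : t ≤ -a) :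
    Φ12 (a, b) t = (a + t, b - 2 * t) := by
  unfold Φ12
  simp only
  rw [min_eq_left (by linarith), max_eq_right (by linarith : a - t ≤ 0),
    max_eq_right ha, max_eq_left (by linarith : (0:ℝ) ≤ t - 0)]
  simp

lemma Φ12_slideL {a b t : ℝ} (ha : a ≤ 0) (h : -a ≤ t) :
    Φ12 (a, b) t = (0, b - 2 * t) := by
  unfold Φ12
  simp only
  rw [min_eq_right (by linarith), max_eq_right (by linarith : a - t ≤ 0),
    max_eq_right ha, max_eq_left (by linarith : (0:ℝ) ≤ t - 0)]
  simp

lemma Φ12_right {a b t : ℝ} (ha : 0 ≤ a) (ht : 0 ≤ t) (h : t ≤ a) :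
    Φ12 (a, b) t = (a - t, b) := by
  unfold Φ12
  simp only
  rw [min_eq_right (by linarith), max_eq_left (by linarith : (0:ℝ) ≤ a - t),
    max_eq_left ha, max_eq_right (by linarith : t - a ≤ 0)]
  simp

lemma Φ12_slideR {a b t : ℝ} (ha : 0 ≤ a) (h : a ≤ t) :
    Φ12 (a, b) t = (0, b - 2 * (t - a)) := by
  unfold Φ12
  simp only
  rw [min_eq_right (by linarith), max_eq_right (by linarith : a - t ≤ 0),
    max_eq_left ha, max_eq_left (by linarith : (0:ℝ) ≤ t - a)]
  simp

lemma F_neg {Y : ℝ × ℝ} (h : Y.1 < 0) : F₁₂ Y = (1, -2) := by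
  simp [F₁₂, h]

lemma F_pos {Y : ℝ × ℝ} (h : 0 < Y.1) : F₁₂ Y = (-1, 0) := by
  rw [F₁₂, if_neg (by linarith), if_pos h]

lemma F_zero {Y : ℝ × ℝ} (h : Y.1 = 0) : F₁₂ Y = (0, -2) := by
  rw [F₁₂, if_neg (by linarith), if_neg (by linarith)]

lemma F_mem (Y : ℝ × ℝ) :
    F₁₂ Y ∈ ({((1:ℝ), (-2:ℝ)), (-1, 0), (0, -2)} : Set (ℝ × ℝ)) := by
  unfold F₁₂; split_ifs <;> simp

lemma hasDerivAt_lin (p q c d t : ℝ) :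
    HasDerivAt (fun s : ℝ => ((p + c * s, q + d * s) : ℝ × ℝ)) (c, d) t := by
  apply HasDerivAt.prodMk
  · simpa using ((hasDerivAt_id t).const_mul c).const_add p
  · simpa using ((hasDerivAt_id t).const_mul d).const_add q

lemma piece_struct (φ : ℝ → ℝ × ℝ) (u t₀ : ℝ) (v : EReal) (c : ℝ × ℝ)
    (ht₀ : u < t₀) (ht₀v : (t₀ : EReal) ≤ v)
    (hop : ∀ t : ℝ, u < t → (t : EReal) < v → HasDerivAt φ c t ∧ F₁₂ (φ t) = c)
    (hFu : F₁₂ (φ u) = c) :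
    (∀ t : ℝ, (u : EReal) < (t : EReal) → (t : EReal) < v → HasDerivAt φ (F₁₂ (φ t)) t) ∧
    ContinuousOn (fun t => F₁₂ (φ t)) {t : ℝ | (u : EReal) < (t : EReal) ∧ (t : EReal) < v} ∧
    Tendsto (fun t => F₁₂ (φ t)) (𝓝[>] u) (𝓝 (F₁₂ (φ u))) := by
  refine ⟨?_, ?_, ?_⟩
  · intro t h1 h2
    rw [EReal.coe_lt_coe_iff] at h1
    rw [(hop t h1 h2).2]
    exact (hop t h1 h2).1
  · exact continuousOn_const.congr fun t htS =>
      (hop t (EReal.coe_lt_coe_iff.mp htS.1) htS.2).2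
  · rw [hFu]
    refine Tendsto.congr' ?_ tendsto_const_nhds
    filter_upwards [Ioo_mem_nhdsGT_of_mem (Set.left_mem_Ico.mpr ht₀)] with x hx
    exact ((hop x hx.1 (lt_of_lt_of_le (EReal.coe_lt_coe_iff.mpr hx.2) ht₀v)).2).symm

lemma derivA {a b : ℝ} (ha : a ≤ 0) {t : ℝ} (h1 : 0 < t) (h2 : t < -a) :
    HasDerivAt (Φ12 (a, b)) (1, -2) t ∧ F₁₂ (Φ12 (a, b) t) = (1, -2) := by
  constructor
  · have hev : Φ12 (a, b) =ᶠ[𝓝 t] fun s => ((a + 1 * s, b + (-2) * s) : ℝ × ℝ) := by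
      filter_upwards [Ioo_mem_nhds h1 h2] with s hs
      rw [Φ12_left ha hs.1.le hs.2.le]
      simp only [Prod.mk.injEq]; constructor <;> ring
    exact (hasDerivAt_lin a b 1 (-2) t).congr_of_eventuallyEq hev
  · rw [Φ12_left ha h1.le h2.le]
    exact F_neg (by norm_num; linarith)

lemma derivB {a b : ℝ} (ha : a ≤ 0) {t : ℝ} (h1 : -a < t) :
    HasDerivAt (Φ12 (a, b)) (0, -2) t ∧ F₁₂ (Φ12 (a, b) t) = (0, -2) := by
  constructor
  · have hev : Φ12 (a, b) =ᶠ[𝓝 t] fun s => ((0 + 0 * s, b + (-2) * s) : ℝ × ℝ) := by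
      filter_upwards [isOpen_Ioi.mem_nhds h1] with s hs
      rw [Φ12_slideL ha (le_of_lt hs)]
      simp only [Prod.mk.injEq]; constructor <;> ring
    exact (hasDerivAt_lin 0 b 0 (-2) t).congr_of_eventuallyEq hev
  · rw [Φ12_slideL ha h1.le]
    exact F_zero (by norm_num)

lemma derivC {a b : ℝ} (ha : 0 ≤ a) {t : ℝ} (h1 : 0 < t) (h2 : t < a) :
    HasDerivAt (Φ12 (a, b)) (-1, 0) t ∧ F₁₂ (Φ12 (a, b) t) = (-1, 0) := by
  constructor
  · have hev : Φ12 (a, b) =ᶠ[𝓝 t] fun s => ((a + (-1) * s, b + 0 * s) : ℝ × ℝ) := by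
      filter_upwards [Ioo_mem_nhds h1 h2] with s hs
      rw [Φ12_right ha hs.1.le hs.2.le]
      simp only [Prod.mk.injEq]; constructor <;> ring
    exact (hasDerivAt_lin a b (-1) 0 t).congr_of_eventuallyEq hev
  · rw [Φ12_right ha h1.le h2.le]
    exact F_pos (by norm_num; linarith)

lemma derivD {a b : ℝ} (ha : 0 ≤ a) {t : ℝ} (h1 : a < t) :
    HasDerivAt (Φ12 (a, b)) (0, -2) t ∧ F₁₂ (Φ12 (a, b) t) = (0, -2) := by
  constructor
  · have hev : Φ12 (a, b) =ᶠ[𝓝 t] fun s => ((0 + 0 * s, (b + 2 * a) + (-2) * s) : ℝ × ℝ) := by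
      filter_upwards [isOpen_Ioi.mem_nhds h1] with s hs
      rw [Φ12_slideR ha (le_of_lt hs)]
      simp only [Prod.mk.injEq]; constructor <;> ring
    exact (hasDerivAt_lin 0 (b + 2 * a) 0 (-2) t).congr_of_eventuallyEq hev
  · rw [Φ12_slideR ha h1.le]
    exact F_zero (by norm_num)

theorem Φ12_isCurve (X : ℝ × ℝ) : IsNetIntegralCurve F₁₂ X (⊤ : EReal) (Φ12 X) := by
  obtain ⟨a, b⟩ := X
  refine ⟨by norm_num, Φ12_zero _, ?_, ?_⟩
  · exact (Φcont.comp (Continuous.prodMk_right (a, b))).continuousOn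
  · rcases lt_trichotomy a 0 with ha | ha | ha
    -- Case a < 0 : D = {0, -a}
    · refine ⟨{0, -a}, ((Set.finite_singleton _).insert _).countable,
        Set.mem_insert _ _, ?_, ?_, ?_, ?_⟩
      · rintro x (rfl | rfl) <;> exact ⟨by linarith, EReal.coe_lt_top _⟩
      · rw [(((Set.finite_singleton _).insert _).isClosed).closure_eq]
        exact Set.inter_subset_left
      · rintro u (rfl | rfl)
        · refine ⟨((-a : ℝ) : EReal), Or.inl ⟨-a, by simp, rfl⟩,
            EReal.coe_lt_coe_iff.mpr (by linarith), ?_, ?_⟩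
          · rintro w (rfl | rfl) hw
            · exact absurd hw (lt_irrefl _)
            · exact le_refl _
          · exact piece_struct _ 0 (-a) _ (1, -2) (by linarith) (le_refl _)
              (fun t h1 h2 => derivA ha.le h1 (EReal.coe_lt_coe_iff.mp h2))
              (by rw [Φ12_zero]; exact F_neg ha)
        · refine ⟨⊤, Or.inr rfl, EReal.coe_lt_top _, ?_, ?_⟩
          · rintro w (rfl | rfl) hw
            · exact absurd (EReal.coe_lt_coe_iff.mp hw) (by linarith)
            · exact absurd hw (lt_irrefl _)
          · exact piece_struct _ (-a) (-a + 1) _ (0, -2) (by linarith) le_top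
              (fun t h1 _ => derivB ha.le h1)
              (by rw [Φ12_slideL ha.le (le_refl _)]; exact F_zero (by norm_num))
      · intro t htd
        have ht : 0 ≤ t := htd.1
        rcases lt_or_ge t (-a) with h | h
        · refine ⟨0, Set.mem_insert _ _, ht, ?_⟩
          rw [Set.eq_empty_iff_forall_notMem]
          rintro x ⟨⟨hx1, hx2⟩, (rfl | rfl)⟩
          · exact absurd hx1 (lt_irrefl _)
          · linarith
        · refine ⟨-a, by simp, h, ?_⟩
          rw [Set.eq_empty_iff_forall_notMem]
          rintro x ⟨⟨hx1, hx2⟩, (rfl | rfl)⟩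
          · linarith
          · exact absurd hx1 (lt_irrefl _)
    -- Case a = 0 : D = {0}
    · subst ha
      refine ⟨{0}, Set.countable_singleton _, rfl, ?_, ?_, ?_, ?_⟩
      · rintro x rfl; exact ⟨le_refl _, EReal.coe_lt_top _⟩
      · rw [isClosed_singleton.closure_eq]; exact Set.inter_subset_left
      · rintro u rfl
        refine ⟨⊤, Or.inr rfl, EReal.coe_lt_top _, ?_, ?_⟩
        · rintro w rfl hw; exact absurd hw (lt_irrefl _)
        · exact piece_struct _ 0 1 _ (0, -2) one_pos le_top
            (fun t h1 _ => derivB (le_refl 0) (by rw [neg_zero]; exact h1))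
            (by rw [Φ12_zero]; exact F_zero (by norm_num))
      · intro t htd
        refine ⟨0, rfl, htd.1, ?_⟩
        rw [Set.eq_empty_iff_forall_notMem]
        rintro x ⟨⟨hx1, hx2⟩, rfl⟩
        exact absurd hx1 (lt_irrefl _)
    -- Case a > 0 : D = {0, a}
    · refine ⟨{0, a}, ((Set.finite_singleton _).insert _).countable,
        Set.mem_insert _ _, ?_, ?_, ?_, ?_⟩
      · rintro x (rfl | rfl) <;> exact ⟨by linarith, EReal.coe_lt_top _⟩
      · rw [(((Set.finite_singleton _).insert _).isClosed).closure_eq]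
        exact Set.inter_subset_left
      · rintro u (rfl | rfl)
        · refine ⟨((a : ℝ) : EReal), Or.inl ⟨a, by simp, rfl⟩,
            EReal.coe_lt_coe_iff.mpr ha, ?_, ?_⟩
          · rintro w (rfl | rfl) hw
            · exact absurd hw (lt_irrefl _)
            · exact le_refl _
          · exact piece_struct _ 0 a _ (-1, 0) ha (le_refl _)
              (fun t h1 h2 => derivC ha.le h1 (EReal.coe_lt_coe_iff.mp h2))
              (by rw [Φ12_zero]; exact F_pos ha)
        · refine ⟨⊤, Or.inr rfl, EReal.coe_lt_top _, ?_, ?_⟩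
          · rintro w (rfl | rfl) hw
            · exact absurd (EReal.coe_lt_coe_iff.mp hw) (by linarith)
            · exact absurd hw (lt_irrefl _)
          · exact piece_struct _ u (u + 1) _ (0, -2) (by linarith) le_top
              (fun t h1 _ => derivD ha.le h1)
              (by rw [Φ12_slideR ha.le (le_refl _)]; exact F_zero (by norm_num))
      · intro t htd
        have ht : 0 ≤ t := htd.1
        rcases lt_or_ge t a with h | h
        · refine ⟨0, Set.mem_insert _ _, ht, ?_⟩
          rw [Set.eq_empty_iff_forall_notMem]
          rintro x ⟨⟨hx1, hx2⟩, (rfl | rfl)⟩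
          · exact absurd hx1 (lt_irrefl _)
          · linarith
        · refine ⟨a, by simp, h, ?_⟩
          rw [Set.eq_empty_iff_forall_notMem]
          rintro x ⟨⟨hx1, hx2⟩, (rfl | rfl)⟩
          · linarith
          · exact absurd hx1 (lt_irrefl _)

lemma step_Phi (X : ℝ × ℝ) {t : ℝ} (ht : 0 ≤ t) :
    ∃ ε > 0, ∀ h' : ℝ, 0 ≤ h' → h' < ε →
      Φ12 X (t + h') = Φ12 X t + h' • F₁₂ (Φ12 X t) := by
  obtain ⟨a, b⟩ := X
  rcases le_or_gt a 0 with ha | ha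
  · rcases lt_or_ge (a + t) 0 with h1 | h1
    · refine ⟨-(a + t), by linarith, fun h' h0 hε => ?_⟩
      rw [Φ12_left ha ht (by linarith), Φ12_left ha (by linarith) (by linarith),
        F_neg (by norm_num; linarith)]
      simp [Prod.ext_iff, Prod.smul_mk]; constructor <;> ring
    · refine ⟨1, one_pos, fun h' h0 hε => ?_⟩
      rw [Φ12_slideL ha (by linarith), Φ12_slideL ha (by linarith),
        F_zero (by norm_num)]
      simp [Prod.ext_iff, Prod.smul_mk]; ring
  · rcases lt_or_ge t a with h1 | h1
    · refine ⟨a - t, by linarith, fun h' h0 hε => ?_⟩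
      rw [Φ12_right ha.le ht h1.le, Φ12_right ha.le (by linarith) (by linarith),
        F_pos (by norm_num; linarith)]
      simp [Prod.ext_iff, Prod.smul_mk]; ring
    · refine ⟨1, one_pos, fun h' h0 hε => ?_⟩
      rw [Φ12_slideR ha.le h1, Φ12_slideR ha.le (by linarith),
        F_zero (by norm_num)]
      simp [Prod.ext_iff, Prod.smul_mk]; ring

lemma step_psi {X : ℝ × ℝ} {ψ : ℝ → ℝ × ℝ}
    (h : IsNetIntegralCurve F₁₂ X (⊤ : EReal) ψ) {t : ℝ} (ht : 0 ≤ t) :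
    ∃ ε > 0, ∀ h' : ℝ, 0 ≤ h' → h' < ε →
      ψ (t + h') = ψ t + h' • F₁₂ (ψ t) := by
  obtain ⟨-, -, hcont, D, hDc, hD0, hDsub, hDcl, hstruct, hcover⟩ := h
  rw [eDom_top] at hcont
  obtain ⟨u, huD, hut, hIoc⟩ := hcover t (by rw [eDom_top]; exact ht)
  obtain ⟨v, hv, huv, hmin, hderiv, hFcont, htend⟩ := hstruct u huD
  have hu0 : 0 ≤ u := (hDsub huD).1
  -- t < v
  have htv : (t : EReal) < v := by
    rcases hv with ⟨w, hwD, rfl⟩ | rfl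
    · rw [EReal.coe_lt_coe_iff] at huv ⊢
      by_contra hle
      have : w ∈ Ioc u t ∩ D := ⟨⟨huv, not_lt.mp hle⟩, hwD⟩
      rw [hIoc] at this; exact this
    · exact EReal.coe_lt_top t
  -- choose ε with t + ε ≤ v  (in the sense below)
  obtain ⟨ε, hε, hεv⟩ : ∃ ε : ℝ, 0 < ε ∧ ∀ s : ℝ, s < t + ε → (s : EReal) < v := by
    rcases hv with ⟨w, hwD, rfl⟩ | rfl
    · rw [EReal.coe_lt_coe_iff] at htv
      exact ⟨w - t, by linarith, fun s hs => EReal.coe_lt_coe_iff.mpr (by linarith)⟩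
    · exact ⟨1, one_pos, fun s _ => EReal.coe_lt_top s⟩
  set S : Set ℝ := {s : ℝ | (u : EReal) < (s : ℝ) ∧ (s : EReal) < v} with hS
  have hmemS : ∀ {s : ℝ}, u < s → s < t + ε → s ∈ S := fun {s} h1 h2 =>
    ⟨EReal.coe_lt_coe_iff.mpr h1, hεv s h2⟩
  have hord : S.OrdConnected :=
    ⟨fun x hx y hy z hz =>
      ⟨hx.1.trans_le (EReal.coe_le_coe_iff.mpr hz.1),
        lt_of_le_of_lt (EReal.coe_le_coe_iff.mpr hz.2) hy.2⟩⟩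
  have hpre : IsPreconnected S := isPreconnected_iff_ordConnected.mpr hord
  have hsub : ∀ s₁ ∈ S, ∀ s₂ ∈ S, F₁₂ (ψ s₁) = F₁₂ (ψ s₂) := by
    have himg : IsPreconnected ((fun s => F₁₂ (ψ s)) '' S) := hpre.image _ hFcont
    have hfin : ((fun s => F₁₂ (ψ s)) '' S).Finite :=
      Set.Finite.subset (Set.toFinite ({((1:ℝ), (-2:ℝ)), (-1, 0), (0, -2)} : Set (ℝ × ℝ)))
        (by rintro _ ⟨s, -, rfl⟩; exact F_mem _)
    intro s₁ h₁ s₂ h₂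
    by_contra hne
    exact (himg.infinite_of_nontrivial ⟨_, ⟨s₁, h₁, rfl⟩, _, ⟨s₂, h₂, rfl⟩, hne⟩) hfin
  have hc : ∀ s ∈ S, F₁₂ (ψ s) = F₁₂ (ψ t) := by
    rcases eq_or_lt_of_le hut with rfl | hlt
    · intro s hsS
      have hs₀ : u + ε / 2 ∈ S := hmemS (by linarith) (by linarith)
      rw [hsub s hsS _ hs₀]
      have hev : (fun s => F₁₂ (ψ s)) =ᶠ[𝓝[>] u] fun _ => F₁₂ (ψ (u + ε / 2)) := by
        filter_upwards [Ioo_mem_nhdsGT_of_mem (Set.left_mem_Ico.mpr (by linarith : u < u + ε / 2))]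
          with x hx
        exact hsub x (hmemS hx.1 (by linarith [hx.2])) _ hs₀
      exact (tendsto_nhds_unique ((tendsto_congr' hev).mp htend) tendsto_const_nhds).symm
    · intro s hsS
      exact hsub s hsS t (hmemS hlt (by linarith))
  refine ⟨ε, hε, fun h' h0 hε' => ?_⟩
  rcases eq_or_lt_of_le h0 with rfl | h0'
  · simp
  · have key : ∀ t' ∈ Ioc t (t + h'), ψ (t + h') = ψ t' + ((t + h') - t') • F₁₂ (ψ t) := by
      intro t' ht'
      set c := F₁₂ (ψ t) with hcdef
      set g : ℝ → ℝ × ℝ := fun s => ψ s - s • c with hg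
      have hmem : ∀ s ∈ Icc t' (t + h'), s ∈ S := fun s hs =>
        hmemS (lt_of_le_of_lt hut (lt_of_lt_of_le ht'.1 hs.1)) (by linarith [hs.2])
      have hder : ∀ s ∈ Icc t' (t + h'), HasDerivAt g 0 s := by
        intro s hs
        have h1 := hderiv s (hmem s hs).1 (hmem s hs).2
        rw [hc s (hmem s hs)] at h1
        have h2 := h1.sub ((hasDerivAt_id s).smul_const c)
        rw [one_smul, sub_self] at h2
        exact h2
      have hgeq : g (t + h') = g t' :=
        constant_of_has_deriv_right_zero
          (fun s hs => (hder s hs).continuousAt.continuousWithinAt)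
          (fun s hs => (hder s (Ico_subset_Icc_self hs)).hasDerivWithinAt)
          (t + h') (right_mem_Icc.mpr ht'.2)
      have h2 : ψ (t + h') - (t + h') • c = ψ t' - t' • c := hgeq
      have h3 : ψ (t + h') = (ψ t' - t' • c) + (t + h') • c := eq_add_of_sub_eq h2
      rw [h3, sub_smul]; abel
    have hIoc' : Ioc t (t + h') ∈ 𝓝[>] t :=
      Ioc_mem_nhdsGT_of_mem (Set.left_mem_Ico.mpr (by linarith))
    have hcw : Tendsto ψ (𝓝[>] t) (𝓝 (ψ t)) := by
      have h1 := hcont t ht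
      exact h1.tendsto.mono_left
        (nhdsWithin_mono t (fun x hx => le_trans ht (le_of_lt hx)))
    have h3 : Tendsto (fun t' => ψ t' + ((t + h') - t') • F₁₂ (ψ t)) (𝓝[>] t)
        (𝓝 (ψ t + h' • F₁₂ (ψ t))) := by
      have h5 : Tendsto (fun t' : ℝ => (t + h') - t') (𝓝[>] t) (𝓝 h') := by
        have h6 : Tendsto (fun t' : ℝ => (t + h') - t') (𝓝 t) (𝓝 ((t + h') - t)) :=
          ((continuous_const (y := t + h')).sub continuous_id).tendsto t
        simpa using h6.mono_left (nhdsWithin_le_nhds (s := Ioi t))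
      exact hcw.add (h5.smul_const _)
    have h4 : Tendsto (fun t' => ψ t' + ((t + h') - t') • F₁₂ (ψ t)) (𝓝[>] t)
        (𝓝 (ψ (t + h'))) := by
      refine (tendsto_const_nhds : Tendsto (fun _ : ℝ => ψ (t + h')) _ _).congr' ?_
      filter_upwards [hIoc'] with x hx
      exact key x hx
    exact tendsto_nhds_unique h4 h3

lemma Φ12_unique {X : ℝ × ℝ} {ψ : ℝ → ℝ × ℝ}
    (h : IsNetIntegralCurve F₁₂ X (⊤ : EReal) ψ) :
    ∀ t : ℝ, 0 ≤ t → ψ t = Φ12 X t := by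
  by_contra hcon
  push_neg at hcon
  set B : Set ℝ := {s : ℝ | 0 ≤ s ∧ ψ s ≠ Φ12 X s} with hB
  have hBne : B.Nonempty := by
    obtain ⟨t, ht, hne⟩ := hcon; exact ⟨t, ht, hne⟩
  have hbdd : BddBelow B := ⟨0, fun x hx => hx.1⟩
  set s' := sInf B with hs'
  have hs0 : 0 ≤ s' := le_csInf hBne fun x hx => hx.1
  have hlt : ∀ s, 0 ≤ s → s < s' → ψ s = Φ12 X s := by
    intro s h0 hss
    by_contra hne
    exact absurd (csInf_le hbdd ⟨h0, hne⟩) (not_le.mpr hss)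
  have hψcont : ContinuousOn ψ (Ici 0) := by
    have := h.2.2.1; rwa [eDom_top] at this
  have heq : ψ s' = Φ12 X s' := by
    rcases eq_or_lt_of_le hs0 with h0 | h0
    · rw [← h0, h.2.1, Φ12_zero]
    · -- limits from the left
      have hne : (𝓝[Ico 0 s'] s').NeBot := by
        apply mem_closure_iff_nhdsWithin_neBot.mp
        rw [closure_Ico h0.ne]
        exact ⟨hs0, le_refl s'⟩
      have h1 : Tendsto ψ (𝓝[Ico 0 s'] s') (𝓝 (ψ s')) :=
        (hψcont s' hs0).tendsto.mono_left (nhdsWithin_mono _ Ico_subset_Ici_self)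
      have h2 : Tendsto ψ (𝓝[Ico 0 s'] s') (𝓝 (Φ12 X s')) := by
        have h3 : Tendsto (fun s => Φ12 X s) (𝓝[Ico 0 s'] s') (𝓝 (Φ12 X s')) :=
          ((Φcont.comp (Continuous.prodMk_right X)).tendsto s').mono_left nhdsWithin_le_nhds
        refine h3.congr' ?_
        filter_upwards [eventually_mem_nhdsWithin] with x hx
        exact (hlt x hx.1 hx.2).symm
      exact tendsto_nhds_unique h1 h2
  obtain ⟨ε₁, hε₁, hstep₁⟩ := step_psi h hs0
  obtain ⟨ε₂, hε₂, hstep₂⟩ := step_Phi X hs0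
  have hfinal : ∀ x ∈ B, s' + min ε₁ ε₂ ≤ x := by
    intro x hx
    by_contra hxlt
    push_neg at hxlt
    have hxs : s' ≤ x := csInf_le hbdd hx
    have h0 : 0 ≤ x - s' := by linarith
    have h1 : x - s' < ε₁ := by
      have := lt_min_iff.mp (by linarith : x - s' < min ε₁ ε₂); exact this.1
    have h2 : x - s' < ε₂ := by
      have := lt_min_iff.mp (by linarith : x - s' < min ε₁ ε₂); exact this.2
    have e1 := hstep₁ (x - s') h0 h1
    have e2 := hstep₂ (x - s') h0 h2
    rw [add_sub_cancel] at e1 e2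
    exact hx.2 (by rw [e1, e2, heq])
  have : s' + min ε₁ ε₂ ≤ s' := le_csInf hBne hfinal
  have hmin : 0 < min ε₁ ε₂ := lt_min hε₁ hε₂
  linarith

/-- For the Filippov field `F₁₂`, through every point of `ℝ²` there is
a unique complete integral curve, and the resulting semiflow `Φ(X,t)` is continuous in
`(X,t) ∈ ℝ² × ℝ₊`. -/
theorem filippov_sliding_semiflow :
    ∃ Φ : ℝ × ℝ → ℝ → ℝ × ℝ,
      (∀ X : ℝ × ℝ, IsNetIntegralCurve F₁₂ X (⊤ : EReal) (Φ X)) ∧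
      (∀ (X : ℝ × ℝ) (ψ : ℝ → ℝ × ℝ), IsNetIntegralCurve F₁₂ X (⊤ : EReal) ψ →
        ∀ t : ℝ, 0 ≤ t → ψ t = Φ X t) ∧
      ContinuousOn (fun p : (ℝ × ℝ) × ℝ => Φ p.1 p.2) ((univ : Set (ℝ × ℝ)) ×ˢ Ici (0 : ℝ)) := by
  exact ⟨Φ12, Φ12_isCurve, fun X ψ h t ht => Φ12_unique h t ht, Φcont.continuousOn⟩
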